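/- Let p be a prime and α a positive integer not divisible by p. If p^e > 4, then u((α·p^(e-1))!) ≡ (-1)^(p·α) · u((α·p^e)!) (mod p^e), where u(n) = n / p^(ν_p(n)) denotes the unit part of n. -/

import Mathlib

/-- The unit part of `n` with respect to `p`: `n / p^(ν_p(n))`. -/
def unitPart (p n : ℕ) : ℕ := n / p ^ (padicValNat p n)

open Finset

open scoped Classical

section Aux

lemma unitPart_eq_ordCompl (p n : ℕ) (hp : p.Prime) :
    unitPart p n = ordCompl[p] n := by
  rw [unitPart, Nat.factorization_def n hp]

lemma filter_dvd_Ico (p m : ℕ) (hp : p.Prime) :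
    (Ico 1 (p * m + 1)).filter (fun k => p ∣ k) = (Ico 1 (m + 1)).image (fun j => p * j) := by
  ext k
  simp only [mem_filter, mem_Ico, mem_image]
  constructor
  · rintro ⟨⟨h1, h2⟩, j, rfl⟩
    refine ⟨j, ⟨?_, ?_⟩, rfl⟩
    · rcases Nat.eq_zero_or_pos j with rfl | h
      · simp at h1
      · exact h
    · have : p * j ≤ p * m := by omega
      have := Nat.le_of_mul_le_mul_left this hp.pos
      omega
  · rintro ⟨j, ⟨h1, h2⟩, rfl⟩
    refine ⟨⟨?_, ?_⟩, ⟨j, rfl⟩⟩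
    · calc 1 ≤ j := h1
        _ ≤ p * j := Nat.le_mul_of_pos_left j hp.pos
    · have : p * j ≤ p * m := Nat.mul_le_mul_left p (by omega)
      omega

lemma factorial_split (p m : ℕ) (hp : p.Prime) :
    Nat.factorial (p * m) =
      p ^ m * Nat.factorial m * ∏ k ∈ (Ico 1 (p * m + 1)).filter (fun k => ¬ p ∣ k), k := by
  have h := Finset.prod_filter_mul_prod_filter_not (Ico 1 (p * m + 1)) (fun k => p ∣ k) id
  simp only [id_eq] at h
  have h2 : ∏ k ∈ (Ico 1 (p * m + 1)).filter (fun k => p ∣ k), k = p ^ m * Nat.factorial m := by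
    rw [filter_dvd_Ico p m hp, Finset.prod_image (by
      intro a _ b _ hab
      exact Nat.eq_of_mul_eq_mul_left hp.pos hab)]
    calc ∏ j ∈ Ico 1 (m + 1), p * j
        = (∏ _j ∈ Ico 1 (m + 1), p) * ∏ j ∈ Ico 1 (m + 1), j := by
          rw [← Finset.prod_mul_distrib]
      _ = p ^ m * Nat.factorial m := by
          rw [Finset.prod_const, Nat.card_Ico, Finset.prod_Ico_id_eq_factorial]
          simp
  calc Nat.factorial (p * m) = ∏ k ∈ Ico 1 (p * m + 1), k := by
        rw [Finset.prod_Ico_id_eq_factorial]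
    _ = _ := by
        rw [← h, h2]

lemma not_dvd_filter_prod (p : ℕ) (hp : p.Prime) (s : Finset ℕ) :
    ¬ p ∣ ∏ k ∈ s.filter (fun k => ¬ p ∣ k), k := by
  intro h
  obtain ⟨k, hk, hdvd⟩ := hp.prime.exists_mem_finset_dvd h
  exact (mem_filter.mp hk).2 hdvd

lemma unitPart_factorial_step (p m : ℕ) (hp : p.Prime) :
    unitPart p (Nat.factorial (p * m)) =
      unitPart p (Nat.factorial m) * ∏ k ∈ (Ico 1 (p * m + 1)).filter (fun k => ¬ p ∣ k), k := by
  rw [unitPart_eq_ordCompl _ _ hp, unitPart_eq_ordCompl _ _ hp, factorial_split p m hp,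
    Nat.ordCompl_mul, Nat.ordCompl_mul]
  have h1 : ordCompl[p] (p ^ m) = 1 := by
    rw [hp.factorization_pow, Finsupp.single_eq_same, Nat.div_self (pow_pos hp.pos m)]
  have h2 : ordCompl[p] (∏ k ∈ (Ico 1 (p * m + 1)).filter (fun k => ¬ p ∣ k), k) =
      ∏ k ∈ (Ico 1 (p * m + 1)).filter (fun k => ¬ p ∣ k), k := by
    rw [Nat.factorization_eq_zero_of_not_dvd (not_dvd_filter_prod p hp _), pow_zero, Nat.div_one]
  rw [h1, h2, one_mul]

/-! ### ZMod side -/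

lemma cast_ne_cast_of_lt {N a b : ℕ} (ha : a < N) (hb : b < N) (h : a ≠ b) :
    (a : ZMod N) ≠ (b : ZMod N) := by
  intro hh
  exact h (by rw [← ZMod.val_cast_of_lt ha, ← ZMod.val_cast_of_lt hb, hh])

lemma isUnit_cast_iff (p e k : ℕ) (hp : p.Prime) (he : 1 ≤ e) :
    IsUnit ((k : ℕ) : ZMod (p ^ e)) ↔ ¬ p ∣ k := by
  rw [ZMod.isUnit_iff_coprime]
  constructor
  · intro h hd
    have h2 : p ∣ Nat.gcd k (p ^ e) := Nat.dvd_gcd hd (dvd_pow_self p (by omega))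
    rw [h] at h2
    have h3 := Nat.le_of_dvd one_pos h2
    have h4 := hp.two_le
    omega
  · intro h
    exact Nat.Coprime.pow_right e (Nat.coprime_comm.mp (hp.coprime_iff_not_dvd.mpr h))

lemma block_prod (p e a N : ℕ) [NeZero N] (hp : p.Prime) (he : 1 ≤ e) (hN : N = p ^ e) :
    ∏ k ∈ Ico (a + 1) (a + 1 + N), (if p ∣ k then 1 else (k : ZMod N)) =
      ∏ x ∈ Finset.univ.filter (fun x : ZMod N => IsUnit x), x := by
  rw [Finset.prod_filter]
  apply Finset.prod_nbij' (fun k => ((k : ℕ) : ZMod N))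
    (fun x => a + 1 + (x - (a : ZMod N) - 1).val)
  · intro k _; exact Finset.mem_univ _
  · intro x _
    have := ZMod.val_lt (x - (a : ZMod N) - 1)
    simp only [mem_Ico]
    omega
  · intro k hk
    simp only [mem_Ico] at hk
    have h1 : ((k : ℕ) : ZMod N) - (a : ZMod N) - 1 = ((k - a - 1 : ℕ) : ZMod N) := by
      have h2 : (k - a - 1 : ℕ) + a + 1 = k := by omega
      conv_lhs => rw [← h2]
      push_cast
      ring
    rw [h1, ZMod.val_cast_of_lt (by omega)]
    omega
  · intro x _
    push_cast [ZMod.natCast_zmod_val]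
    ring
  · intro k _
    by_cases hd : p ∣ k
    · rw [if_pos hd, if_neg]
      rw [hN, isUnit_cast_iff p e k hp he]
      simpa using hd
    · rw [if_neg hd, if_pos (by rw [hN]; exact (isUnit_cast_iff p e k hp he).mpr hd)]

lemma G_cast (p e n N : ℕ) [NeZero N] (hp : p.Prime) (he : 1 ≤ e) (hN : N = p ^ e) :
    ((∏ k ∈ (Ico 1 (n * N + 1)).filter (fun k => ¬ p ∣ k), k : ℕ) : ZMod N) =
      (∏ x ∈ Finset.univ.filter (fun x : ZMod N => IsUnit x), x) ^ n := by
  have hcast : ∀ m : ℕ, ((∏ k ∈ (Ico 1 (m + 1)).filter (fun k => ¬ p ∣ k), k : ℕ) : ZMod N) =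
      ∏ k ∈ Ico 1 (m + 1), (if p ∣ k then 1 else (k : ZMod N)) := by
    intro m
    rw [Nat.cast_prod, Finset.prod_filter]
    apply Finset.prod_congr rfl
    intro k _
    by_cases hd : p ∣ k <;> simp [hd]
  induction n with
  | zero => simp
  | succ n ih =>
    have h1 : (1 : ℕ) ≤ n * N + 1 := by omega
    have h2 : n * N + 1 ≤ (n + 1) * N + 1 := by
      have : n * N ≤ (n + 1) * N := Nat.mul_le_mul_right _ (by omega)
      omega
    have key := Finset.prod_Ico_consecutive
      (fun k => (if p ∣ k then 1 else (k : ZMod N))) h1 h2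
    have hIco : Ico (n * N + 1) ((n + 1) * N + 1) =
        Ico (n * N + 1) (n * N + 1 + N) := by
      congr 1
      ring
    rw [hcast, ← key, hIco, block_prod p e (n * N) N hp he hN, ← hcast, ih, pow_succ]

lemma prod_sq_one (N : ℕ) [NeZero N] :
    ∏ x ∈ Finset.univ.filter (fun x : ZMod N => IsUnit x), x =
      ∏ x ∈ Finset.univ.filter (fun x : ZMod N => x * x = 1), x := by
  have hsub : Finset.univ.filter (fun x : ZMod N => x * x = 1) ⊆
      Finset.univ.filter (fun x : ZMod N => IsUnit x) := by
    intro x hx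
    simp only [mem_filter, mem_univ, true_and] at hx ⊢
    exact IsUnit.of_mul_eq_one x hx
  rw [← Finset.prod_sdiff hsub]
  have hone : ∏ x ∈ (Finset.univ.filter (fun x : ZMod N => IsUnit x)) \
      (Finset.univ.filter (fun x : ZMod N => x * x = 1)), x = 1 := by
    apply Finset.prod_involution (g := fun a _ => a⁻¹)
    · intro a ha
      simp only [mem_sdiff, mem_filter, mem_univ, true_and] at ha
      exact ZMod.mul_inv_of_unit a ha.1
    · intro a ha _
      simp only [mem_sdiff, mem_filter, mem_univ, true_and] at ha
      intro heq
      refine ha.2 ?_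
      nth_rewrite 2 [← heq]
      exact ZMod.mul_inv_of_unit a ha.1
    · intro a ha
      simp only [mem_sdiff, mem_filter, mem_univ, true_and] at ha
      exact ZMod.inv_eq_of_mul_eq_one _ _ _ (ZMod.inv_mul_of_unit a ha.1)
    · intro a ha
      simp only [mem_sdiff, mem_filter, mem_univ, true_and] at ha ⊢
      have hinv : a⁻¹ * a = 1 := ZMod.inv_mul_of_unit a ha.1
      have hinvinv : a⁻¹⁻¹ = a := ZMod.inv_eq_of_mul_eq_one _ _ _ hinv
      refine ⟨IsUnit.of_mul_eq_one _ hinv, ?_⟩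
      intro hsq
      have h3 : a⁻¹⁻¹ = a⁻¹ := ZMod.inv_eq_of_mul_eq_one _ _ _ hsq
      rw [hinvinv] at h3
      exact ha.2 (by rw [h3]; exact hsq)
  rw [hone, one_mul]

lemma val_facts {N : ℕ} [NeZero N] (hN1 : 1 < N) {x : ZMod N} (hx : x * x = 1) :
    1 ≤ x.val ∧ x.val < N ∧ N ∣ x.val * x.val - 1 := by
  haveI : Fact (1 < N) := ⟨hN1⟩
  have hk : x.val < N := ZMod.val_lt x
  have hxv : ((x.val : ℕ) : ZMod N) = x := ZMod.natCast_zmod_val x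
  have hk1 : 1 ≤ x.val := by
    rcases Nat.eq_zero_or_pos x.val with h0 | h
    · exfalso
      rw [← hxv, h0] at hx
      simp at hx
    · exact h
  have hcast : ((x.val * x.val : ℕ) : ZMod N) = ((1 : ℕ) : ZMod N) := by
    push_cast
    rw [hxv, hx]
  have hmod : x.val * x.val ≡ 1 [MOD N] := (ZMod.natCast_eq_natCast_iff _ _ _).mp hcast
  have hdvd : N ∣ x.val * x.val - 1 :=
    (Nat.modEq_iff_dvd' (Nat.one_le_iff_ne_zero.mpr (by positivity))).mp hmod.symm
  exact ⟨hk1, hk, hdvd⟩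

lemma neg_one_eq_cast {N : ℕ} (hN1 : 1 < N) : (-1 : ZMod N) = ((N - 1 : ℕ) : ZMod N) := by
  rw [Nat.cast_sub (by omega), ZMod.natCast_self, Nat.cast_one, zero_sub]

lemma sq_filter_odd (p e N : ℕ) [NeZero N] (hp : p.Prime) (hodd : p ≠ 2) (he : 1 ≤ e)
    (hN : N = p ^ e) :
    Finset.univ.filter (fun x : ZMod N => x * x = 1) = {1, -1} := by
  have hN1 : 1 < N := by
    rw [hN]
    calc 1 < p := hp.one_lt
      _ = p ^ 1 := (pow_one p).symm
      _ ≤ p ^ e := Nat.pow_le_pow_right hp.pos he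
  ext x
  simp only [mem_filter, mem_univ, true_and, mem_insert, mem_singleton]
  constructor
  · intro hx
    obtain ⟨hk1, hk, hdvd⟩ := val_facts hN1 hx
    haveI : Fact (1 < N) := ⟨hN1⟩
    have hxv : ((x.val : ℕ) : ZMod N) = x := ZMod.natCast_zmod_val x
    set k := x.val with hkdef
    clear_value k
    obtain ⟨t, ht⟩ : ∃ t, k = t + 1 := ⟨k - 1, by omega⟩
    have hfac : k * k - 1 = t * (t + 2) := by
      rw [ht]
      have h := (by ring : (t + 1) * (t + 1) = t * (t + 2) + 1)
      omega
    rw [hfac, hN] at hdvd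
    by_cases hpt : p ∣ t
    · left
      have hpt2 : ¬ p ∣ t + 2 := by
        intro hd
        have h2 : p ∣ 2 := by
          have := Nat.dvd_sub hd hpt
          simpa using this
        exact hodd ((Nat.prime_dvd_prime_iff_eq hp Nat.prime_two).mp h2)
      have cop : (p ^ e).Coprime (t + 2) :=
        Nat.Coprime.pow_left e (hp.coprime_iff_not_dvd.mpr hpt2)
      have hNt : p ^ e ∣ t := cop.dvd_of_dvd_mul_right hdvd
      rw [← hN] at hNt
      have ht0 : t = 0 := Nat.eq_zero_of_dvd_of_lt hNt (by omega)
      rw [← hxv, ht, ht0]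
      norm_num
    · right
      have cop : (p ^ e).Coprime t :=
        Nat.Coprime.pow_left e (hp.coprime_iff_not_dvd.mpr hpt)
      have hNt : p ^ e ∣ t + 2 := cop.dvd_of_dvd_mul_left hdvd
      rw [← hN] at hNt
      have hle : N ≤ t + 2 := Nat.le_of_dvd (by omega) hNt
      have hkN : k = N - 1 := by omega
      rw [← hxv, hkN, neg_one_eq_cast hN1]
  · rintro (rfl | rfl)
    · rw [one_mul]
    · rw [neg_mul_neg, one_mul]

lemma sq_filter_two (e N : ℕ) [NeZero N] (he : 3 ≤ e) (hN : N = 2 ^ e) :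
    Finset.univ.filter (fun x : ZMod N => x * x = 1) =
      {1, -1, ((2 ^ (e - 1) + 1 : ℕ) : ZMod N), ((2 ^ (e - 1) - 1 : ℕ) : ZMod N)} := by
  have hTN : 2 * 2 ^ (e - 1) = N := by
    rw [hN, ← pow_succ']
    congr 1
    omega
  have hT4 : 4 ≤ 2 ^ (e - 1) := by
    calc (4 : ℕ) = 2 ^ 2 := by norm_num
      _ ≤ 2 ^ (e - 1) := Nat.pow_le_pow_right (by norm_num) (by omega)
  have hN1 : 1 < N := by omega
  have h4e : 4 * 2 ^ (e - 2) = N := by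
    rw [hN, show (4 : ℕ) = 2 ^ 2 by norm_num, ← pow_add]
    congr 1
    omega
  have hTT : 2 ^ (e - 1) * 2 ^ (e - 1) = 2 ^ (e - 2) * N := by
    rw [hN, ← pow_add, ← pow_add]
    congr 1
    omega
  ext x
  simp only [mem_filter, mem_univ, true_and, mem_insert, mem_singleton]
  constructor
  · intro hx
    obtain ⟨hk1, hk, hdvd⟩ := val_facts hN1 hx
    haveI : Fact (1 < N) := ⟨hN1⟩
    have hxv : ((x.val : ℕ) : ZMod N) = x := ZMod.natCast_zmod_val x
    set k := x.val with hkdef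
    clear_value k
    have hkodd : ¬ 2 ∣ k := by
      intro h2k
      have h1 : 2 ∣ k * k := h2k.mul_right k
      have h2 : 2 ∣ k * k - 1 := dvd_trans (by omega) hdvd
      have h3 : 1 ≤ k * k := Nat.one_le_iff_ne_zero.mpr (by positivity)
      omega
    obtain ⟨a, ha⟩ : ∃ a, k = 2 * a + 1 := ⟨k / 2, by omega⟩
    have hfac : k * k - 1 = 4 * (a * (a + 1)) := by
      rw [ha]
      have h := (by ring : (2 * a + 1) * (2 * a + 1) = 4 * (a * (a + 1)) + 1)
      omega
    rw [hfac, ← h4e] at hdvd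
    have hdvda : 2 ^ (e - 2) ∣ a * (a + 1) :=
      (Nat.mul_dvd_mul_iff_left (by norm_num : (0 : ℕ) < 4)).mp hdvd
    have h2T : 2 * 2 ^ (e - 2) = 2 ^ (e - 1) := by
      rw [← pow_succ']
      congr 1
      omega
    by_cases h2a : 2 ∣ a
    · have cop : (2 ^ (e - 2)).Coprime (a + 1) :=
        Nat.Coprime.pow_left _ (Nat.prime_two.coprime_iff_not_dvd.mpr (by omega))
      obtain ⟨s, hs⟩ := cop.dvd_of_dvd_mul_right hdvda
      have hks : k - 1 = 2 ^ (e - 1) * s := by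
        have h5 : 2 ^ (e - 1) * s = 2 * (2 ^ (e - 2) * s) := by rw [← h2T]; ring
        omega
      have hs1 : s ≤ 1 := by
        by_contra hcon
        push_neg at hcon
        have : 2 ^ (e - 1) * 2 ≤ 2 ^ (e - 1) * s := Nat.mul_le_mul_left _ (by omega)
        omega
      interval_cases s
      · left
        have : k = 1 := by omega
        rw [← hxv, this]
        norm_num
      · right; right; left
        have : k = 2 ^ (e - 1) + 1 := by omega
        rw [← hxv, this]
    · have cop : (2 ^ (e - 2)).Coprime a :=
        Nat.Coprime.pow_left _ (Nat.prime_two.coprime_iff_not_dvd.mpr h2a)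
      obtain ⟨s, hs⟩ := cop.dvd_of_dvd_mul_left hdvda
      have hks : k + 1 = 2 ^ (e - 1) * s := by
        have h5 : 2 ^ (e - 1) * s = 2 * (2 ^ (e - 2) * s) := by rw [← h2T]; ring
        omega
      have hs1 : 1 ≤ s := by
        rcases Nat.eq_zero_or_pos s with rfl | h
        · omega
        · exact h
      have hs2 : s ≤ 2 := by
        by_contra hcon
        push_neg at hcon
        have : 2 ^ (e - 1) * 3 ≤ 2 ^ (e - 1) * s := Nat.mul_le_mul_left _ (by omega)
        omega
      interval_cases s
      · right; right; right
        have : k = 2 ^ (e - 1) - 1 := by omega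
        rw [← hxv, this]
      · right; left
        have : k = N - 1 := by omega
        rw [← hxv, this, neg_one_eq_cast hN1]
  · have hcc : ((2 ^ (e - 1) : ℕ) : ZMod N) * ((2 ^ (e - 1) : ℕ) : ZMod N) = 0 := by
      rw [← Nat.cast_mul, hTT, Nat.cast_mul, ZMod.natCast_self, mul_zero]
    have hc2 : ((2 ^ (e - 1) : ℕ) : ZMod N) + ((2 ^ (e - 1) : ℕ) : ZMod N) = 0 := by
      rw [← Nat.cast_add, show (2 ^ (e - 1) + 2 ^ (e - 1) : ℕ) = N by omega, ZMod.natCast_self]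
    rintro (rfl | rfl | h | h)
    · rw [one_mul]
    · rw [neg_mul_neg, one_mul]
    · rw [h, Nat.cast_add, Nat.cast_one]
      have hexp : ∀ c : ZMod N, (c + 1) * (c + 1) = c * c + (c + c) + 1 := by intro c; ring
      rw [hexp, hcc, hc2]
      ring
    · rw [h]
      rw [Nat.cast_sub (by omega), Nat.cast_one]
      have hexp : ∀ c : ZMod N, (c - 1) * (c - 1) = c * c - (c + c) + 1 := by intro c; ring
      rw [hexp, hcc, hc2]
      ring

lemma prod_units_eq (p e N : ℕ) [NeZero N] (hp : p.Prime) (hN4 : 4 < N) (hN : N = p ^ e) :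
    ∏ x ∈ Finset.univ.filter (fun x : ZMod N => IsUnit x), x = (-1) ^ p := by
  have he1 : 1 ≤ e := by
    rcases Nat.eq_zero_or_pos e with rfl | h
    · rw [pow_zero] at hN
      omega
    · exact h
  have hN1 : 1 < N := by omega
  rw [prod_sq_one N]
  by_cases h2 : p = 2
  · subst h2
    have he3 : 3 ≤ e := by
      by_contra h
      push_neg at h
      have : 2 ^ e ≤ 2 ^ 2 := Nat.pow_le_pow_right (by norm_num) (by omega)
      norm_num at this
      omega
    rw [sq_filter_two e N he3 hN]
    have hTN : 2 * 2 ^ (e - 1) = N := by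
      rw [hN, ← pow_succ']
      congr 1
      omega
    have hT4 : 4 ≤ 2 ^ (e - 1) := by
      calc (4 : ℕ) = 2 ^ 2 := by norm_num
        _ ≤ 2 ^ (e - 1) := Nat.pow_le_pow_right (by norm_num) (by omega)
    have hTT : 2 ^ (e - 1) * 2 ^ (e - 1) = 2 ^ (e - 2) * N := by
      rw [hN, ← pow_add, ← pow_add]
      congr 1
      omega
    set T := 2 ^ (e - 1) with hT
    clear_value T
    -- the four elements as casts
    have e1 : (1 : ZMod N) = ((1 : ℕ) : ZMod N) := by norm_num
    have e2 : (-1 : ZMod N) = ((N - 1 : ℕ) : ZMod N) := neg_one_eq_cast hN1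
    have ne12 : (1 : ZMod N) ≠ -1 := by
      rw [e2, e1]; exact cast_ne_cast_of_lt (by omega) (by omega) (by omega)
    have ne13 : (1 : ZMod N) ≠ ((T + 1 : ℕ) : ZMod N) := by
      rw [e1]; exact cast_ne_cast_of_lt (by omega) (by omega) (by omega)
    have ne14 : (1 : ZMod N) ≠ ((T - 1 : ℕ) : ZMod N) := by
      rw [e1]; exact cast_ne_cast_of_lt (by omega) (by omega) (by omega)
    have ne23 : (-1 : ZMod N) ≠ ((T + 1 : ℕ) : ZMod N) := by
      rw [e2]; exact cast_ne_cast_of_lt (by omega) (by omega) (by omega)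
    have ne24 : (-1 : ZMod N) ≠ ((T - 1 : ℕ) : ZMod N) := by
      rw [e2]; exact cast_ne_cast_of_lt (by omega) (by omega) (by omega)
    have ne34 : ((T + 1 : ℕ) : ZMod N) ≠ ((T - 1 : ℕ) : ZMod N) :=
      cast_ne_cast_of_lt (by omega) (by omega) (by omega)
    have hm1 : (1 : ZMod N) ∉
        ({-1, ((T + 1 : ℕ) : ZMod N), ((T - 1 : ℕ) : ZMod N)} : Finset (ZMod N)) := by
      simp only [mem_insert, mem_singleton]
      push_neg
      exact ⟨ne12, ne13, ne14⟩
    have hm2 : (-1 : ZMod N) ∉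
        ({((T + 1 : ℕ) : ZMod N), ((T - 1 : ℕ) : ZMod N)} : Finset (ZMod N)) := by
      simp only [mem_insert, mem_singleton]
      push_neg
      exact ⟨ne23, ne24⟩
    rw [Finset.prod_insert hm1, Finset.prod_insert hm2, Finset.prod_pair ne34]
    have hmulnat : (T + 1) * (T - 1) = T * T - 1 := by
      obtain ⟨u, hu⟩ : ∃ u, T = u + 1 := ⟨T - 1, by omega⟩
      subst hu
      simp only [Nat.add_sub_cancel]
      have h2 := (by ring : (u + 1 + 1) * u = u * u + 2 * u)
      have h3 := (by ring : (u + 1) * (u + 1) = u * u + 2 * u + 1)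
      omega
    have hmul : ((T + 1 : ℕ) : ZMod N) * ((T - 1 : ℕ) : ZMod N) = -1 := by
      rw [← Nat.cast_mul, hmulnat, Nat.cast_sub (Nat.one_le_iff_ne_zero.mpr (by positivity)),
        hTT, Nat.cast_mul, ZMod.natCast_self, mul_zero, Nat.cast_one, zero_sub]
    rw [hmul]
    norm_num
  · rw [sq_filter_odd p e N hp h2 he1 hN]
    have ne12 : (1 : ZMod N) ≠ -1 := by
      rw [neg_one_eq_cast hN1, show (1 : ZMod N) = ((1 : ℕ) : ZMod N) by norm_num]
      exact cast_ne_cast_of_lt (by omega) (by omega) (by omega)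
    rw [Finset.prod_pair ne12, one_mul, (hp.odd_of_ne_two h2).neg_one_pow]

end Aux

theorem stmt0 (p α e : ℕ) (hp : p.Prime) (hα : 0 < α) (hpα : ¬ p ∣ α)
    (he : 4 < p ^ e) :
    (unitPart p (Nat.factorial (α * p ^ (e - 1))) : ℤ) ≡
      (-1) ^ (p * α) * (unitPart p (Nat.factorial (α * p ^ e)) : ℤ) [ZMOD (p ^ e : ℕ)] := by
  have he1 : 1 ≤ e := by
    by_contra h
    push_neg at h
    interval_cases e
    simp at he
  haveI : NeZero (p ^ e) := ⟨(pow_pos hp.pos e).ne'⟩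
  have hfact : α * p ^ e = p * (α * p ^ (e - 1)) := by
    rw [show p * (α * p ^ (e - 1)) = α * (p ^ (e - 1) * p) by ring, ← pow_succ]
    congr 2
    omega
  have key := unitPart_factorial_step p (α * p ^ (e - 1)) hp
  rw [← hfact] at key
  rw [← ZMod.intCast_eq_intCast_iff]
  push_cast
  rw [key, Nat.cast_mul, G_cast p e α (p ^ e) hp he1 rfl,
    prod_units_eq p e (p ^ e) hp he rfl, ← pow_mul]
  have hsq : ((-1 : ZMod (p ^ e)) ^ (p * α)) * ((-1 : ZMod (p ^ e)) ^ (p * α)) = 1 := by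
    rw [← pow_add]
    exact Even.neg_one_pow ⟨p * α, rfl⟩
  linear_combination (-(unitPart p (Nat.factorial (α * p ^ (e - 1))) : ZMod (p ^ e))) * hsq
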